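/- Let X = x_1 + ... + x_n be a sum of independent real random variables, let F(t) = Pr[X > t], and let m = max_i (sup x_i - inf x_i). Then for any reals b ≤ c ≤ d, we have F(d)·F(b) ≤ F(c)·F(b+d-c-m). -/

import Mathlib

open MeasureTheory ProbabilityTheory

/-- **Log-concavity lemma for sums of independent bounded random variables.**
`X = x_1 + ... + x_n` is a sum of independent real random variables,
`F t = Pr[X > t]`, `m = max_i (sup x_i - inf x_i)`. Then for `b ≤ c ≤ d`,
`F d * F b ≤ F c * F (b + d - c - m)`. -/
theorem log_concavity_lemma {Ω : Type*} [MeasurableSpace Ω]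
    (μ : Measure Ω) [IsProbabilityMeasure μ]
    (n : ℕ) (hn : 0 < n) (x : Fin n → Ω → ℝ)
    (hmeas : ∀ i, Measurable (x i))
    (hindep : iIndepFun x μ)
    (hbdd : ∀ i, BddAbove (Set.range (x i)) ∧ BddBelow (Set.range (x i)))
    (m : ℝ)
    (hm : m = Finset.univ.sup' ⟨⟨0, hn⟩, Finset.mem_univ _⟩
      (fun i => sSup (Set.range (x i)) - sInf (Set.range (x i))))
    (F : ℝ → ℝ) (hF : ∀ t, F t = (μ {ω | t < ∑ i, x i ω}).toReal)
    (b c d : ℝ) (hbc : b ≤ c) (hcd : c ≤ d) :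
    F d * F b ≤ F c * F (b + d - c - m) := by
  classical
  have hΩ : Nonempty Ω := by
    by_contra h
    rw [not_nonempty_iff] at h
    have h1 : μ Set.univ = 1 := measure_univ
    rw [Set.univ_eq_empty_iff.mpr h] at h1
    simp at h1
  obtain ⟨ω₀⟩ := hΩ
  have hlo : ∀ i ω, sInf (Set.range (x i)) ≤ x i ω :=
    fun i ω => csInf_le (hbdd i).2 ⟨ω, rfl⟩
  have hhi : ∀ i ω, x i ω ≤ sSup (Set.range (x i)) :=
    fun i ω => le_csSup (hbdd i).1 ⟨ω, rfl⟩
  have hrange : ∀ i, sSup (Set.range (x i)) - sInf (Set.range (x i)) ≤ m := by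
    intro i
    rw [hm]
    exact Finset.le_sup' (fun i => sSup (Set.range (x i)) - sInf (Set.range (x i)))
      (Finset.mem_univ i)
  have hm0 : 0 ≤ m := by
    have h1 := hlo ⟨0, hn⟩ ω₀
    have h2 := hhi ⟨0, hn⟩ ω₀
    have h3 := hrange ⟨0, hn⟩
    linarith
  have AUX : ∀ (s : Finset (Fin n)), s.Nonempty → ∀ b c d : ℝ, b ≤ c → c ≤ d →
      μ {ω | d < ∑ i ∈ s, x i ω} * μ {ω | b < ∑ i ∈ s, x i ω} ≤
      μ {ω | c < ∑ i ∈ s, x i ω} * μ {ω | b + d - c - m < ∑ i ∈ s, x i ω} := by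
    intro s hs
    induction hs using Finset.Nonempty.cons_induction with
    | singleton i =>
      intro b c d hbc hcd
      simp only [Finset.sum_singleton]
      by_cases hdc : d - c ≤ m
      · refine mul_le_mul' (measure_mono ?_) (measure_mono ?_)
        · intro ω h
          simp only [Set.mem_setOf_eq] at h ⊢
          linarith
        · intro ω h
          simp only [Set.mem_setOf_eq] at h ⊢
          linarith
      · push_neg at hdc
        set lo := sInf (Set.range (x i)) with hlodef
        set hi := sSup (Set.range (x i)) with hhidef
        by_cases hd : hi ≤ d
        · have : {ω | d < x i ω} = (∅ : Set Ω) := by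
            ext ω
            simp only [Set.mem_setOf_eq, Set.mem_empty_iff_false, iff_false, not_lt]
            exact le_trans (hhi i ω) hd
          rw [this]
          simp
        · push_neg at hd
          have hclo : c < lo := by
            have := hrange i
            linarith
          have hcuniv : {ω | c < x i ω} = (Set.univ : Set Ω) := by
            ext ω
            simp only [Set.mem_setOf_eq, Set.mem_univ, iff_true]
            exact lt_of_lt_of_le hclo (hlo i ω)
          rw [hcuniv, measure_univ, one_mul]
          calc μ {ω | d < x i ω} * μ {ω | b < x i ω}
              ≤ μ {ω | b + d - c - m < x i ω} * 1 :=
                mul_le_mul' (measure_mono (by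
                  intro ω h
                  simp only [Set.mem_setOf_eq] at h ⊢
                  linarith)) prob_le_one
            _ = μ {ω | b + d - c - m < x i ω} := mul_one _
    | cons a s ha hs ih =>
      intro b c d hbc hcd
      by_cases hdc : d - c ≤ m
      · refine mul_le_mul' (measure_mono ?_) (measure_mono ?_)
        · intro ω h
          simp only [Set.mem_setOf_eq] at h ⊢
          linarith
        · intro ω h
          simp only [Set.mem_setOf_eq] at h ⊢
          linarith
      · push_neg at hdc
        set Y : Ω → ℝ := fun ω => ∑ i ∈ s, x i ω with hYdef
        have hY : Measurable Y := Finset.measurable_sum _ (fun i _ => hmeas i)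
        have hYfun : Y = ∑ j ∈ s, x j := by
          funext ω
          simp [hYdef]
        have hop : IndepFun (x a) Y μ := by
          rw [hYfun]
          exact (hindep.indepFun_finsetSum_of_notMem hmeas ha).symm
        have hmap : μ.map (fun ω => (x a ω, Y ω)) = (μ.map (x a)).prod (μ.map Y) :=
          (indepFun_iff_map_prod_eq_prod_map_map (hmeas a).aemeasurable
            hY.aemeasurable).mp hop
        set ν : Measure ℝ := μ.map (x a) with hνdef
        set G : ℝ → ENNReal := fun r => μ {ω | r < Y ω} with hGdef
        have hGanti : Antitone G := by
          intro r r' hrr'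
          exact measure_mono (fun ω h => lt_of_le_of_lt hrr' h)
        have hGmeas : Measurable G := hGanti.measurable
        have key : ∀ t : ℝ, μ {ω | t < x a ω + Y ω} = ∫⁻ r, G (t - r) ∂ν := by
          intro t
          have hset : MeasurableSet {p : ℝ × ℝ | t < p.1 + p.2} :=
            measurableSet_lt measurable_const (measurable_fst.add measurable_snd)
          have h1 : {ω | t < x a ω + Y ω} =
              (fun ω => (x a ω, Y ω)) ⁻¹' {p : ℝ × ℝ | t < p.1 + p.2} := rfl
          rw [h1, ← Measure.map_apply ((hmeas a).prodMk hY) hset, hmap,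
            Measure.prod_apply hset]
          refine lintegral_congr (fun r => ?_)
          have h2 : (Prod.mk r ⁻¹' {p : ℝ × ℝ | t < p.1 + p.2}) = Set.Ioi (t - r) := by
            ext y
            simp only [Set.mem_preimage, Set.mem_setOf_eq, Set.mem_Ioi]
            constructor <;> intro <;> linarith
          rw [h2, Measure.map_apply hY measurableSet_Ioi]
          rfl
        set lo := sInf (Set.range (x a)) with hlodef
        set hi := sSup (Set.range (x a)) with hhidef
        have hae : ∀ᵐ r ∂ν, r ∈ Set.Icc lo hi :=
          (ae_map_iff (hmeas a).aemeasurable measurableSet_Icc).mpr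
            (Filter.Eventually.of_forall
              (fun ω => Set.mem_Icc.mpr ⟨hlo a ω, hhi a ω⟩))
        have hsumeq : ∀ t : ℝ, {ω | t < ∑ i ∈ Finset.cons a s ha, x i ω}
            = {ω | t < x a ω + Y ω} := by
          intro t
          ext ω
          rw [Set.mem_setOf_eq, Set.mem_setOf_eq, Finset.sum_cons]
        have hGm1 : ∀ u : ℝ, Measurable (fun r : ℝ => G (u - r)) :=
          fun u => hGmeas.comp (measurable_const.sub measurable_id)
        -- key step 1 : for r in [lo, hi]
        have step1 : ∀ r ∈ Set.Icc lo hi,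
            G (d - r) * (∫⁻ t, G (b - t) ∂ν) ≤
            (∫⁻ t, G (c - t) ∂ν) * G (b + d - c - m - r) := by
          intro r hr
          rw [← lintegral_const_mul _ (hGm1 b)]
          calc ∫⁻ t, G (d - r) * G (b - t) ∂ν
              ≤ ∫⁻ t, G (c - t) * G (b + d - c - m - r) ∂ν := by
                refine lintegral_mono_ae (hae.mono (fun t ht => ?_))
                have h1 : b - t ≤ c - t := by linarith
                have h2 : c - t ≤ d - r := by
                  have := hrange a
                  have h3 := hr.1
                  have h4 := hr.2
                  have h5 := ht.1
                  have h6 := ht.2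
                  linarith
                have := ih (b - t) (c - t) (d - r) h1 h2
                have harg : (b - t) + (d - r) - (c - t) - m = b + d - c - m - r := by
                  ring
                rw [harg] at this
                exact this
            _ = (∫⁻ t, G (c - t) ∂ν) * G (b + d - c - m - r) :=
                lintegral_mul_const _ (hGm1 c)
        simp only [hsumeq, key]
        calc (∫⁻ r, G (d - r) ∂ν) * (∫⁻ t, G (b - t) ∂ν)
            = ∫⁻ r, G (d - r) * (∫⁻ t, G (b - t) ∂ν) ∂ν :=
              (lintegral_mul_const _ (hGm1 d)).symm
          _ ≤ ∫⁻ r, (∫⁻ t, G (c - t) ∂ν) * G (b + d - c - m - r) ∂ν :=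
              lintegral_mono_ae (hae.mono (fun r hr => step1 r hr))
          _ = (∫⁻ t, G (c - t) ∂ν) * ∫⁻ r, G (b + d - c - m - r) ∂ν :=
              lintegral_const_mul _ (hGm1 (b + d - c - m))
  -- conclude
  have huniv : (Finset.univ : Finset (Fin n)).Nonempty := ⟨⟨0, hn⟩, Finset.mem_univ _⟩
  have hmain := AUX Finset.univ huniv b c d hbc hcd
  simp only [hF]
  rw [← ENNReal.toReal_mul, ← ENNReal.toReal_mul]
  refine ENNReal.toReal_mono ?_ hmain
  exact ENNReal.mul_ne_top (measure_ne_top μ _) (measure_ne_top μ _)
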